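/- Let r be a positive integer, q a prime with q ≡ 5 (mod 12) or q ≡ 7 (mod 12), and d a positive integer such that ord_q(d) is not divisible by n, where n ≥ 2. Then there are no integers x, y with gcd(x, y, r) = 1 and (x+r)^2 + (x+2r)^2 + ... + (x+dr)^2 = y^n. -/

import Mathlib

lemma sum_sq_closed (x r : ℤ) (d : ℕ) :
    12 * ∑ k ∈ Finset.Icc 1 d, (x + (k : ℤ) * r) ^ 2 =
      (d : ℤ) * (3 * (2 * x + ((d : ℤ) + 1) * r) ^ 2 + ((d : ℤ) ^ 2 - 1) * r ^ 2) := by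
  induction d with
  | zero => simp
  | succ m ih =>
    rw [Finset.sum_Icc_succ_top (by omega), mul_add, ih]
    push_cast
    ring

lemma three_not_square (q : ℕ) (hq : q.Prime) (hq12 : q % 12 = 5 ∨ q % 12 = 7) :
    ¬ IsSquare (3 : ZMod q) := by
  haveI : Fact q.Prime := ⟨hq⟩
  have hq3 : q ≠ 3 := by rintro rfl; omega
  have h3 : ((3 : ℕ) : ZMod q) = (3 : ZMod q) := by push_cast; ring
  rcases hq12 with h | h
  · -- q % 4 = 1
    have h4 : q % 4 = 1 := by omega
    rw [← h3, ZMod.exists_sq_eq_prime_iff_of_mod_four_eq_one h4 (by norm_num)]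
    rw [← ZMod.natCast_mod]
    have hm : q % 3 = 2 := by omega
    rw [hm]
    decide
  · -- q % 4 = 3, 3 % 4 = 3
    have h4 : q % 4 = 3 := by omega
    rw [← h3, ZMod.exists_sq_eq_prime_iff_of_mod_four_eq_three h4 (by norm_num) hq3]
    rw [← ZMod.natCast_mod]
    have hm : q % 3 = 1 := by omega
    rw [hm]
    decide

theorem stmt_2 (r : ℤ) (hr : 0 < r) (q : ℕ) (hq : q.Prime)
    (hq12 : q % 12 = 5 ∨ q % 12 = 7) (d : ℕ) (hd : 0 < d)
    (n : ℕ) (hn : 2 ≤ n) (hval : ¬ n ∣ padicValNat q d) :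
    ¬ ∃ x y : ℤ, Int.gcd x (Int.gcd y r) = 1 ∧
      ∑ k ∈ Finset.Icc 1 d, (x + (k : ℤ) * r) ^ 2 = y ^ n := by
  haveI : Fact q.Prime := ⟨hq⟩
  rintro ⟨x, y, hg, hsum⟩
  have hq5 : 5 ≤ q := by
    have := hq.two_le
    rcases hq12 with h | h <;> omega
  -- q divides d
  have hv0 : padicValNat q d ≠ 0 := by
    intro h0; exact hval (h0 ▸ dvd_zero n)
  have hqd : q ∣ d := by
    by_contra hnd
    exact hv0 (padicValNat.eq_zero_of_not_dvd hnd)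
  set u : ℤ := 2 * x + ((d : ℤ) + 1) * r with hu
  set A : ℤ := 3 * u ^ 2 + ((d : ℤ) ^ 2 - 1) * r ^ 2 with hA
  have E : 12 * y ^ n = (d : ℤ) * A := by
    rw [← hsum]; exact sum_sq_closed x r d
  have hq12' : ¬ (q : ℤ) ∣ 12 := by
    intro h
    have : q ∣ 12 := by exact_mod_cast h
    have hle : q ≤ 12 := Nat.le_of_dvd (by norm_num) this
    have h57 : q = 5 ∨ q = 7 := by omega
    rcases h57 with rfl | rfl <;> norm_num at this
  -- key: q does not divide A
  have hqA : ¬ (q : ℤ) ∣ A := by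
    intro hdvd
    have hAz : (A : ZMod q) = 0 := (ZMod.intCast_zmod_eq_zero_iff_dvd A q).mpr hdvd
    have hdz : ((d : ℕ) : ZMod q) = 0 := (ZMod.natCast_eq_zero_iff d q).mpr hqd
    have key : 3 * (u : ZMod q) ^ 2 = (r : ZMod q) ^ 2 := by
      have h := hAz
      rw [hA] at h
      push_cast at h
      rw [hdz] at h
      linear_combination h
    -- u ≡ 0 and r ≡ 0 mod q
    have hu0 : (u : ZMod q) = 0 := by
      by_contra hu0
      apply three_not_square q hq hq12
      exact ⟨(r : ZMod q) * ((u : ZMod q))⁻¹, by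
        field_simp
        linear_combination key⟩
    have hr0 : (r : ZMod q) = 0 := by
      have : ((r : ZMod q)) ^ 2 = 0 := by rw [← key, hu0]; ring
      exact pow_eq_zero_iff (by norm_num) |>.mp this
    have hqr : (q : ℤ) ∣ r := (ZMod.intCast_zmod_eq_zero_iff_dvd r q).mp hr0
    have hqu : (q : ℤ) ∣ u := (ZMod.intCast_zmod_eq_zero_iff_dvd u q).mp hu0
    have hqdZ : (q : ℤ) ∣ (d : ℤ) := Int.natCast_dvd_natCast.mpr hqd
    have hqx : (q : ℤ) ∣ x := by
      have h2x : (q : ℤ) ∣ 2 * x := by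
        have : 2 * x = u - ((d : ℤ) + 1) * r := by rw [hu]; ring
        rw [this]
        exact dvd_sub hqu (Dvd.dvd.mul_left hqr _)
      have hqprime : Prime (q : ℤ) := Nat.prime_iff_prime_int.mp hq
      rcases hqprime.dvd_mul.mp h2x with h | h
      · exfalso; exact hq12' (h.trans (by norm_num))
      · exact h
    have hqy : (q : ℤ) ∣ y := by
      have hdA : (q : ℤ) ∣ 12 * y ^ n := E ▸ Dvd.dvd.mul_right hqdZ A
      have hqprime : Prime (q : ℤ) := Nat.prime_iff_prime_int.mp hq
      rcases hqprime.dvd_mul.mp hdA with h | h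
      · exact absurd h hq12'
      · exact hqprime.dvd_of_dvd_pow h
    have : (q : ℤ) ∣ (Int.gcd x (Int.gcd y r) : ℤ) :=
      Int.dvd_coe_gcd hqx (Int.dvd_coe_gcd hqy hqr)
    rw [hg] at this
    have := Int.le_of_dvd one_pos this
    omega
  -- valuation argument
  have hA0 : A ≠ 0 := fun h => hqA (h ▸ dvd_zero _)
  have hy0 : y ≠ 0 := by
    rintro rfl
    have : (0 : ℤ) ^ n = 0 := zero_pow (by omega)
    rw [this, mul_zero] at E
    have : (d : ℤ) ≠ 0 := by exact_mod_cast hd.ne'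
    exact hA0 (by
      rcases mul_eq_zero.mp E.symm with h | h
      · exact absurd h this
      · exact h)
  -- pass to natAbs
  have EN : 12 * y.natAbs ^ n = d * A.natAbs := by
    have := congrArg Int.natAbs E
    rwa [Int.natAbs_mul, Int.natAbs_mul, Int.natAbs_pow, show (12 : ℤ).natAbs = 12 from rfl,
      Int.natAbs_natCast] at this
  have hY0 : y.natAbs ≠ 0 := Int.natAbs_ne_zero.mpr hy0
  have hB0 : A.natAbs ≠ 0 := Int.natAbs_ne_zero.mpr hA0
  have hqB : ¬ q ∣ A.natAbs := by
    intro h; exact hqA (Int.natCast_dvd.mpr h)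
  have hq12N : ¬ q ∣ 12 := fun h => hq12' (Int.natCast_dvd_natCast.mpr h)
  have hval_eq : padicValNat q (12 * y.natAbs ^ n) = padicValNat q (d * A.natAbs) := by rw [EN]
  rw [padicValNat.mul (by norm_num) (pow_ne_zero n hY0),
      padicValNat.mul hd.ne' hB0,
      padicValNat.pow _ n,
      padicValNat.eq_zero_of_not_dvd hq12N,
      padicValNat.eq_zero_of_not_dvd hqB, zero_add, add_zero] at hval_eq
  exact hval ⟨padicValNat q y.natAbs, hval_eq.symm⟩
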